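/- arXiv:2402.04706 — 6 statements merged into one kernel-verified Lean document; each statement's English description precedes it below -/
import Mathlib

section
/- Let C be a nonempty finite set, m > 1 a natural number, I a finite set, (A_i)_{i∈I} a family of subsets of C, and g : I → [0,1] with ∑_{i∈I} g(i) = 1. For ε > 0 define B = { k ∈ C : ∑{ g(i) : i ∈ I, k ∈ A_i } > 1 - ε }. Then ‖B‖ ≥ min_{i∈I} ‖A_i‖ − log_m(1/ε), where ‖X‖ = log_m(|C|/(|C|-|X|)) (interpreted as ∞ when X = C). -/
open scoped Classical

/-- Co-bigness of the norm `‖X‖ = log_m(|C|/(|C|-|X|))` (with `‖C‖ = ∞`, so the case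
`B = C` of the conclusion is stated as a separate disjunct): for subsets `A_i ⊆ C`
(all proper, so their norms are real), weights `g` summing to `1`, and `ε > 0`,
the set `B = {k ∈ C : ∑{g(i) : i ∈ I, k ∈ A_i} > 1-ε}` satisfies
`‖B‖ ≥ min_i ‖A_i‖ − log_m(1/ε)`. -/
theorem stmt5 {α ι : Type*} [DecidableEq α] (C : Finset α) (m : ℕ)
    (hC : C.Nonempty) (hm : 1 < m)
    (I : Finset ι) (hI : I.Nonempty) (A : ι → Finset α)
    (hA : ∀ i ∈ I, A i ⊆ C) (hAprop : ∀ i ∈ I, A i ≠ C)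
    (g : ι → ℝ) (hg : ∀ i ∈ I, g i ∈ Set.Icc (0 : ℝ) 1) (hsum : ∑ i ∈ I, g i = 1)
    (ε : ℝ) (hε : 0 < ε) :
    C.filter (fun k => 1 - ε < ∑ i ∈ I.filter (fun i => k ∈ A i), g i) = C ∨
    (I.image (fun i =>
        Real.logb m ((C.card : ℝ) / ((C.card : ℝ) - ((A i).card : ℝ))))).min' (hI.image _)
      - Real.logb m (1 / ε) ≤
    Real.logb m ((C.card : ℝ) / ((C.card : ℝ) -
      ((C.filter (fun k => 1 - ε < ∑ i ∈ I.filter (fun i => k ∈ A i), g i)).card : ℝ))) := by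
  classical
  set B := C.filter (fun k => 1 - ε < ∑ i ∈ I.filter (fun i => k ∈ A i), g i) with hB
  by_cases hBC : B = C
  · left; exact hBC
  right
  have hBsub : B ⊆ C := Finset.filter_subset _ _
  set D := C \ B with hD
  have hDcard : (D.card : ℝ) = (C.card : ℝ) - (B.card : ℝ) := by
    rw [hD, Finset.card_sdiff_of_subset hBsub, Nat.cast_sub (Finset.card_le_card hBsub)]
  have hDpos : 0 < D.card := by
    rcases Finset.exists_of_ssubset (hBsub.ssubset_of_ne hBC) with ⟨k, hkC, hkB⟩
    exact Finset.card_pos.2 ⟨k, Finset.mem_sdiff.2 ⟨hkC, hkB⟩⟩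
  -- choose j maximizing C.card - (A j).card
  obtain ⟨j, hjI, hjmax⟩ := I.exists_max_image (fun i => C.card - (A i).card) hI
  set M : ℕ := C.card - (A j).card with hM
  have hAjlt : (A j).card < C.card :=
    Finset.card_lt_card ((hA j hjI).ssubset_of_ne (hAprop j hjI))
  have hMcast : (M : ℝ) = (C.card : ℝ) - ((A j).card : ℝ) := by
    rw [hM, Nat.cast_sub hAjlt.le]
  have hMpos : (0 : ℝ) < M := by
    rw [hMcast]; have := (Nat.cast_lt (α := ℝ)).2 hAjlt; linarith
  -- pointwise bound on D
  have hpt : ∀ k ∈ D, ε ≤ ∑ i ∈ I.filter (fun i => k ∉ A i), g i := by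
    intro k hk
    rw [hD, Finset.mem_sdiff] at hk
    have hknB : ¬ (1 - ε < ∑ i ∈ I.filter (fun i => k ∈ A i), g i) := by
      intro h; exact hk.2 (Finset.mem_filter.2 ⟨hk.1, h⟩)
    have hsplit := Finset.sum_filter_add_sum_filter_not I (fun i => k ∈ A i) g
    rw [hsum] at hsplit
    push_neg at hknB
    linarith
  -- counting bound
  have hcount : ε * (D.card : ℝ) ≤ (M : ℝ) := by
    have h1 : ε * (D.card : ℝ) ≤ ∑ k ∈ D, ∑ i ∈ I.filter (fun i => k ∉ A i), g i := by
      rw [mul_comm]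
      calc (D.card : ℝ) * ε = ∑ _k ∈ D, ε := by rw [Finset.sum_const, nsmul_eq_mul]
        _ ≤ _ := Finset.sum_le_sum hpt
    have h2 : ∑ k ∈ D, ∑ i ∈ I.filter (fun i => k ∉ A i), g i
        = ∑ i ∈ I, ((D.filter (fun k => k ∉ A i)).card : ℝ) * g i := by
      simp_rw [Finset.sum_filter]
      rw [Finset.sum_comm]
      congr 1
      ext i
      rw [← Finset.sum_filter, Finset.sum_const, nsmul_eq_mul]
    have h3 : ∀ i ∈ I, ((D.filter (fun k => k ∉ A i)).card : ℝ) * g i ≤ (M : ℝ) * g i := by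
      intro i hi
      have hsub : D.filter (fun k => k ∉ A i) ⊆ C \ A i := by
        intro k hk
        rw [Finset.mem_filter] at hk
        exact Finset.mem_sdiff.2 ⟨(Finset.sdiff_subset) hk.1, hk.2⟩
      have hcard : (D.filter (fun k => k ∉ A i)).card ≤ M := by
        calc (D.filter (fun k => k ∉ A i)).card ≤ (C \ A i).card := Finset.card_le_card hsub
          _ = C.card - (A i).card := Finset.card_sdiff_of_subset (hA i hi)
          _ ≤ M := hjmax i hi
      exact mul_le_mul_of_nonneg_right (Nat.cast_le.2 hcard) (hg i hi).1
    calc ε * (D.card : ℝ) ≤ ∑ i ∈ I, ((D.filter (fun k => k ∉ A i)).card : ℝ) * g i := by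
          rw [← h2]; exact h1
      _ ≤ ∑ i ∈ I, (M : ℝ) * g i := Finset.sum_le_sum h3
      _ = (M : ℝ) := by rw [← Finset.mul_sum, hsum, mul_one]
    -- done
  -- min' ≤ value at j
  have hmin : (I.image (fun i =>
      Real.logb m ((C.card : ℝ) / ((C.card : ℝ) - ((A i).card : ℝ))))).min' (hI.image _)
      ≤ Real.logb m ((C.card : ℝ) / ((C.card : ℝ) - ((A j).card : ℝ))) :=
    Finset.min'_le _ _ (Finset.mem_image_of_mem _ hjI)
  have hCpos : (0 : ℝ) < C.card := Nat.cast_pos.2 (Finset.card_pos.2 hC)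
  have hdpos : (0 : ℝ) < (C.card : ℝ) - (B.card : ℝ) := by
    rw [← hDcard]; exact_mod_cast hDpos
  have hm1 : (1 : ℝ) < (m : ℝ) := by exact_mod_cast hm
  have hkey : Real.logb m ((C.card : ℝ) / ((C.card : ℝ) - ((A j).card : ℝ)))
      - Real.logb m (1 / ε) ≤
      Real.logb m ((C.card : ℝ) / ((C.card : ℝ) - (B.card : ℝ))) := by
    rw [← hMcast, one_div, Real.logb_inv, sub_neg_eq_add, ← Real.logb_mul
      (by positivity) (ne_of_gt hε)]
    apply Real.logb_le_logb_of_le hm1 (by positivity)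
    rw [div_mul_eq_mul_div, div_le_div_iff₀ hMpos hdpos]
    have : ε * (D.card : ℝ) ≤ (M : ℝ) := hcount
    rw [hDcard] at this
    nlinarith
  linarith
end

section
/- Let C be a nonempty finite set, m > 1 a natural number, I a finite set, (A_i)_{i∈I} subsets of C, g : I → [0,1] with ∑g(i)=1, ε > 0, and x = min_i ‖A_i‖ finite. Then the set B = { k ∈ C : ∑{g(i) : k ∈ A_i} > 1-ε } satisfies |B| ≥ |C|(1 − m^{-x}/ε). -/
open scoped Classical

/-- Quantitative core of co-bigness: with `x = min_i ‖A_i‖` finite (all `A_i` proper),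
the set `B = {k ∈ C : ∑{g(i) : k ∈ A_i} > 1-ε}` satisfies `|B| ≥ |C|(1 − m^{-x}/ε)`. -/
theorem stmt7 {α ι : Type*} [DecidableEq α] (C : Finset α) (m : ℕ)
    (hC : C.Nonempty) (hm : 1 < m)
    (I : Finset ι) (hI : I.Nonempty) (A : ι → Finset α)
    (hA : ∀ i ∈ I, A i ⊆ C) (hAprop : ∀ i ∈ I, A i ≠ C)
    (g : ι → ℝ) (hg : ∀ i ∈ I, g i ∈ Set.Icc (0 : ℝ) 1) (hsum : ∑ i ∈ I, g i = 1)
    (ε : ℝ) (hε : 0 < ε) :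
    (C.card : ℝ) * (1 - (m : ℝ) ^
        (-( (I.image (fun i =>
            Real.logb m ((C.card : ℝ) / ((C.card : ℝ) - ((A i).card : ℝ))))).min'
              (hI.image _))) / ε) ≤
      ((C.filter (fun k => 1 - ε < ∑ i ∈ I.filter (fun i => k ∈ A i), g i)).card : ℝ) := by
  set c : ℝ := (C.card : ℝ) with hcdef
  have hcpos : 0 < c := by
    rw [hcdef]
    exact_mod_cast Finset.card_pos.mpr hC
  set x : ℝ := (I.image (fun i =>
      Real.logb m ((C.card : ℝ) / ((C.card : ℝ) - ((A i).card : ℝ))))).min'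
      (hI.image _) with hxdef
  have hm1 : (1:ℝ) < (m:ℝ) := by exact_mod_cast hm
  have hmpos : (0:ℝ) < (m:ℝ) := by linarith
  have hmne : (m:ℝ) ≠ 1 := ne_of_gt hm1
  set t : ℝ := (m:ℝ) ^ (-x) with htdef
  have ht0 : 0 ≤ t := le_of_lt (Real.rpow_pos_of_pos hmpos _)
  -- key pointwise bound
  have key : ∀ i ∈ I, c * (1 - t) ≤ ((A i).card : ℝ) := by
    intro i hi
    have hlt : (A i).card < C.card :=
      Finset.card_lt_card ((hA i hi).ssubset_of_ne (hAprop i hi))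
    have ha : ((A i).card : ℝ) < c := by rw [hcdef]; exact_mod_cast hlt
    have hd : 0 < c - ((A i).card : ℝ) := by linarith
    have hy : 0 < c / (c - ((A i).card : ℝ)) := by positivity
    have hxle : x ≤ Real.logb m (c / (c - ((A i).card : ℝ))) :=
      Finset.min'_le _ _ (Finset.mem_image_of_mem _ hi)
    have h1 : (m:ℝ) ^ (-(Real.logb m (c / (c - ((A i).card : ℝ)))))
        = (c - ((A i).card : ℝ)) / c := by
      rw [Real.rpow_neg (le_of_lt hmpos), Real.rpow_logb hmpos hmne hy]
      rw [inv_div]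
    have h2 : (m:ℝ) ^ (-(Real.logb m (c / (c - ((A i).card : ℝ))))) ≤ t :=
      Real.rpow_le_rpow_of_exponent_le (le_of_lt hm1) (by linarith)
    have h3 : (c - ((A i).card : ℝ)) / c ≤ t := h1 ▸ h2
    have h4 : c - ((A i).card : ℝ) ≤ t * c := (div_le_iff₀ hcpos).mp h3
    nlinarith
  -- lower bound on weighted sum
  have hsum1 : c * (1 - t) ≤ ∑ i ∈ I, g i * ((A i).card : ℝ) := by
    have : c * (1 - t) = ∑ i ∈ I, g i * (c * (1 - t)) := by
      rw [← Finset.sum_mul, hsum, one_mul]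
    rw [this]
    refine Finset.sum_le_sum fun i hi => ?_
    exact mul_le_mul_of_nonneg_left (key i hi) (hg i hi).1
  -- swap sums
  have hswap : ∑ k ∈ C, ∑ i ∈ I.filter (fun i => k ∈ A i), g i
      = ∑ i ∈ I, g i * ((A i).card : ℝ) := by
    simp_rw [Finset.sum_filter]
    rw [Finset.sum_comm]
    refine Finset.sum_congr rfl fun i hi => ?_
    rw [← Finset.sum_filter, Finset.sum_const, Finset.filter_mem_eq_inter,
      Finset.inter_eq_right.mpr (hA i hi), nsmul_eq_mul, mul_comm]
  set f : α → ℝ := fun k => ∑ i ∈ I.filter (fun i => k ∈ A i), g i with hfdef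
  have hf1 : ∀ k, f k ≤ 1 := by
    intro k
    rw [← hsum]
    exact Finset.sum_le_sum_of_subset_of_nonneg (Finset.filter_subset _ _)
      (fun i hi _ => (hg i hi).1)
  set B := C.filter (fun k => 1 - ε < f k) with hBdef
  have hsplit : ∑ k ∈ B, f k + ∑ k ∈ C.filter (fun k => ¬ (1 - ε < f k)), f k
      = ∑ k ∈ C, f k := Finset.sum_filter_add_sum_filter_not _ _ _
  have hB1 : ∑ k ∈ B, f k ≤ (B.card : ℝ) := by
    calc ∑ k ∈ B, f k ≤ ∑ k ∈ B, (1:ℝ) := Finset.sum_le_sum fun k _ => hf1 k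
    _ = (B.card : ℝ) := by simp
  have hB2 : ∑ k ∈ C.filter (fun k => ¬ (1 - ε < f k)), f k
      ≤ ((C.filter (fun k => ¬ (1 - ε < f k))).card : ℝ) * (1 - ε) := by
    calc ∑ k ∈ C.filter (fun k => ¬ (1 - ε < f k)), f k
        ≤ ∑ k ∈ C.filter (fun k => ¬ (1 - ε < f k)), (1 - ε) := by
          refine Finset.sum_le_sum fun k hk => ?_
          exact not_lt.mp (Finset.mem_filter.mp hk).2
      _ = _ := by rw [Finset.sum_const, nsmul_eq_mul]
  have hcard : (B.card : ℝ) + ((C.filter (fun k => ¬ (1 - ε < f k))).card : ℝ) = c := by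
    rw [hcdef]
    exact_mod_cast Finset.card_filter_add_card_filter_not (s := C)
      (p := fun k => 1 - ε < f k)
  have hchain : c * (1 - t) ≤ (B.card : ℝ)
      + ((C.filter (fun k => ¬ (1 - ε < f k))).card : ℝ) * (1 - ε) := by
    calc c * (1 - t) ≤ ∑ i ∈ I, g i * ((A i).card : ℝ) := hsum1
      _ = ∑ k ∈ C, f k := hswap.symm
      _ = ∑ k ∈ B, f k + ∑ k ∈ C.filter (fun k => ¬ (1 - ε < f k)), f k := hsplit.symm
      _ ≤ _ := add_le_add hB1 hB2
  show c * (1 - t / ε) ≤ (B.card : ℝ)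
  have hεne : ε ≠ 0 := ne_of_gt hε
  set b : ℝ := (B.card : ℝ)
  set d : ℝ := ((C.filter (fun k => ¬ (1 - ε < f k))).card : ℝ)
  have : c * ε - c * t ≤ b * ε := by nlinarith
  rw [mul_sub, mul_one, sub_le_iff_le_add]
  have : c - b ≤ c * t / ε := by
    rw [le_div_iff₀ hε]; nlinarith
  linarith [this, (by ring : c * (t / ε) = c * t / ε)]
end

section
/- Let K be a nonempty set, B a Boolean subalgebra of the powerset of K (a field of sets over K), and Ξ a finitely additive probability measure on B such that every finite set in B has Ξ-measure zero. Then Ξ has the uniform approximation property: for every ε > 0 and every finite partition P ⊆ B of K into pairwise disjoint sets with union K, there is a nonempty finite u ⊆ K such that ||u ∩ A|/|u| − Ξ(A)| < ε for all A ∈ P. -/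
open scoped Classical

/-- Any finitely additive probability measure on a field of sets over `K` giving all
finite sets measure zero has the uniform approximation property. -/
theorem stmt9 {K : Type*} (hK : Nonempty K) (S : Set (Set K)) (Ξ : Set K → ℝ)
    (hSempty : (∅ : Set K) ∈ S) (hSuniv : (Set.univ : Set K) ∈ S)
    (hSunion : ∀ A ∈ S, ∀ B ∈ S, A ∪ B ∈ S) (hScompl : ∀ A ∈ S, Aᶜ ∈ S)
    (h0 : Ξ ∅ = 0) (h1 : Ξ Set.univ = 1)
    (hrange : ∀ A ∈ S, Ξ A ∈ Set.Icc (0 : ℝ) 1)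
    (hadd : ∀ A ∈ S, ∀ B ∈ S, Disjoint A B → Ξ (A ∪ B) = Ξ A + Ξ B)
    (hfin : ∀ A ∈ S, A.Finite → Ξ A = 0)
    (ε : ℝ) (hε : 0 < ε)
    (P : Finset (Set K)) (hPS : ∀ A ∈ P, A ∈ S)
    (hPdisj : ∀ A ∈ P, ∀ B ∈ P, A ≠ B → Disjoint A B)
    (hPcover : ⋃₀ ↑P = (Set.univ : Set K)) :
    ∃ u : Finset K, u.Nonempty ∧ ∀ A ∈ P,
      |((u.filter (fun k => k ∈ A)).card : ℝ) / (u.card : ℝ) - Ξ A| < ε := by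
  classical
  -- the union of any finset of sets in S is in S
  have hmemS : ∀ Q : Finset (Set K), (∀ A ∈ Q, A ∈ S) → ⋃₀ ↑Q ∈ S := by
    intro Q
    induction Q using Finset.induction_on with
    | empty => intro _; simpa using hSempty
    | insert _ _ hA ih =>
      intro hQ
      rw [Finset.coe_insert, Set.sUnion_insert]
      exact hSunion _ (hQ _ (Finset.mem_insert_self _ _)) _
        (ih fun A hA => hQ _ (Finset.mem_insert_of_mem hA))
  -- finite additivity over finsets
  have hsum : ∀ Q : Finset (Set K), (∀ A ∈ Q, A ∈ S) →
      (∀ A ∈ Q, ∀ B ∈ Q, A ≠ B → Disjoint A B) → Ξ (⋃₀ ↑Q) = ∑ A ∈ Q, Ξ A := by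
    intro Q
    induction Q using Finset.induction_on with
    | empty => intro _ _; simpa using h0
    | @insert A Q hA ih =>
      intro hQ hdisj
      rw [Finset.coe_insert, Set.sUnion_insert, Finset.sum_insert hA]
      have hAS : A ∈ S := hQ _ (Finset.mem_insert_self _ _)
      have hQS : ∀ B ∈ Q, B ∈ S := fun B hB => hQ _ (Finset.mem_insert_of_mem hB)
      have hdisjA : Disjoint A (⋃₀ ↑Q) := by
        rw [Set.disjoint_sUnion_right]
        intro B hB
        simp only [Finset.mem_coe] at hB
        exact hdisj A (Finset.mem_insert_self _ _) B (Finset.mem_insert_of_mem hB)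
          (fun h => hA (h ▸ hB))
      rw [hadd A hAS _ (hmemS Q hQS) hdisjA,
        ih hQS (fun X hX Y hY hXY => hdisj X (Finset.mem_insert_of_mem hX) Y
          (Finset.mem_insert_of_mem hY) hXY)]
  have hsumP : ∑ A ∈ P, Ξ A = 1 := by
    rw [← hsum P hPS hPdisj, hPcover, h1]
  set Ppos : Finset (Set K) := P.filter (fun A => 0 < Ξ A) with hPposdef
  have hsumPpos : ∑ A ∈ Ppos, Ξ A = 1 := by
    rw [hPposdef, Finset.sum_filter_of_ne, hsumP]
    intro A hA hne
    exact lt_of_le_of_ne (hrange A (hPS A hA)).1 (Ne.symm hne)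
  have hPposne : Ppos.Nonempty := by
    by_contra h
    rw [Finset.not_nonempty_iff_eq_empty] at h
    rw [h, Finset.sum_empty] at hsumPpos
    norm_num at hsumPpos
  -- each set of positive measure is infinite
  have hinf : ∀ A ∈ Ppos, A.Infinite := by
    intro A hA
    rw [hPposdef, Finset.mem_filter] at hA
    by_contra h
    rw [Set.not_infinite] at h
    have := hfin A (hPS A hA.1) h
    linarith [hA.2]
  -- choose N
  set p : ℕ := Ppos.card with hpdef
  obtain ⟨N, hN⟩ := exists_nat_gt ((p + 1) / ε)
  have hNε : (p : ℝ) + 1 < ε * N := by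
    rw [div_lt_iff₀ hε] at hN; linarith
  have hNpos : (0 : ℝ) < N := by
    have : (0:ℝ) ≤ (p:ℝ) := Nat.cast_nonneg _
    nlinarith
  -- choose sample points
  have hchoice : ∀ A ∈ Ppos, ∃ t : Finset K, ↑t ⊆ A ∧ t.card = ⌈Ξ A * N⌉₊ :=
    fun A hA => (hinf A hA).exists_subset_card_eq _
  choose f hf1 hf2 using hchoice
  set u : Finset K := Ppos.attach.biUnion (fun a => f a.1 a.2) with hudef
  have hmemPposP : ∀ A ∈ Ppos, A ∈ P := fun A hA => (Finset.mem_filter.mp hA).1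
  have hfdisj : ∀ (a : {x // x ∈ Ppos}) (b : {x // x ∈ Ppos}), a ≠ b →
      Disjoint (f a.1 a.2) (f b.1 b.2) := by
    intro a b hab
    have hAB : a.1 ≠ b.1 := fun h => hab (Subtype.ext h)
    have hd := hPdisj a.1 (hmemPposP _ a.2) b.1 (hmemPposP _ b.2) hAB
    rw [Finset.disjoint_left]
    intro x hx hx'
    exact Set.disjoint_left.mp hd (hf1 a.1 a.2 hx) (hf1 b.1 b.2 hx')
  have hcard : u.card = ∑ A ∈ Ppos, ⌈Ξ A * N⌉₊ := by
    rw [hudef, Finset.card_biUnion (fun a _ b _ hab => hfdisj a b hab)]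
    rw [← Finset.sum_attach Ppos (fun A => ⌈Ξ A * N⌉₊)]
    exact Finset.sum_congr rfl (fun a _ => hf2 a.1 a.2)
  -- membership in u
  have humem : ∀ x, x ∈ u ↔ ∃ A, ∃ hA : A ∈ Ppos, x ∈ f A hA := by
    intro x
    rw [hudef, Finset.mem_biUnion]
    constructor
    · rintro ⟨a, _, hx⟩; exact ⟨a.1, a.2, hx⟩
    · rintro ⟨A, hA, hx⟩; exact ⟨⟨A, hA⟩, Finset.mem_attach _ _, hx⟩
  -- filter identities
  have hfilter_pos : ∀ A, ∀ hA : A ∈ Ppos, u.filter (fun k => k ∈ A) = f A hA := by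
    intro A hA
    ext x
    rw [Finset.mem_filter, humem x]
    constructor
    · rintro ⟨⟨B, hB, hx⟩, hxA⟩
      by_cases hAB : A = B
      · subst hAB; exact hx
      · exact absurd hxA (Set.disjoint_right.mp
          (hPdisj A (hmemPposP _ hA) B (hmemPposP _ hB) hAB) (hf1 B hB hx))
    · intro hx
      exact ⟨⟨A, hA, hx⟩, hf1 A hA hx⟩
  have hfilter_zero : ∀ A ∈ P, A ∉ Ppos → u.filter (fun k => k ∈ A) = ∅ := by
    intro A hAP hA
    rw [Finset.eq_empty_iff_forall_notMem]
    intro x hx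
    rw [Finset.mem_filter, humem x] at hx
    obtain ⟨⟨B, hB, hxB⟩, hxA⟩ := hx
    have hAB : A ≠ B := fun h => hA (h ▸ hB)
    exact Set.disjoint_right.mp (hPdisj A hAP B (hmemPposP _ hB) hAB) (hf1 B hB hxB) hxA
  -- numeric bounds on u.card
  have hcard_lb : (N : ℝ) ≤ (u.card : ℝ) := by
    rw [hcard]
    push_cast
    calc (N : ℝ) = ∑ A ∈ Ppos, Ξ A * N := by
          rw [← Finset.sum_mul, hsumPpos, one_mul]
      _ ≤ ∑ A ∈ Ppos, (⌈Ξ A * N⌉₊ : ℝ) :=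
          Finset.sum_le_sum (fun A _ => Nat.le_ceil _)
  have hcard_ub : (u.card : ℝ) ≤ N + p := by
    rw [hcard]
    push_cast
    have : ∑ A ∈ Ppos, (⌈Ξ A * N⌉₊ : ℝ) ≤ ∑ A ∈ Ppos, (Ξ A * N + 1) := by
      apply Finset.sum_le_sum
      intro A hA
      have h0' : 0 ≤ Ξ A * N := by
        have := (Finset.mem_filter.mp hA).2
        positivity
      have := Nat.ceil_lt_add_one h0'
      linarith
    rw [Finset.sum_add_distrib, ← Finset.sum_mul, hsumPpos, one_mul,
      Finset.sum_const, nsmul_eq_mul, mul_one] at this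
    linarith
  have hMpos : (0 : ℝ) < (u.card : ℝ) := lt_of_lt_of_le hNpos hcard_lb
  have hune : u.Nonempty := by
    rw [← Finset.card_pos]
    exact_mod_cast hMpos
  refine ⟨u, hune, ?_⟩
  intro A hAP
  by_cases hA : A ∈ Ppos
  · rw [hfilter_pos A hA, hf2 A hA]
    set M : ℝ := (u.card : ℝ)
    have hΞpos : 0 < Ξ A := (Finset.mem_filter.mp hA).2
    have hΞle : Ξ A ≤ 1 := (hrange A (hPS A hAP)).2
    have hceil_lb : Ξ A * N ≤ (⌈Ξ A * N⌉₊ : ℝ) := Nat.le_ceil _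
    have hceil_ub : (⌈Ξ A * N⌉₊ : ℝ) < Ξ A * N + 1 := by
      have h0' : 0 ≤ Ξ A * N := by positivity
      exact_mod_cast Nat.ceil_lt_add_one h0'
    rw [abs_lt]
    have hp0 : (0:ℝ) ≤ (p:ℝ) := Nat.cast_nonneg _
    have he1 : Ξ A * M ≤ Ξ A * ((N:ℝ) + p) :=
      mul_le_mul_of_nonneg_left hcard_ub hΞpos.le
    have he2 : ε * N ≤ ε * M := mul_le_mul_of_nonneg_left hcard_lb hε.le
    have he3 : Ξ A * (p:ℝ) ≤ 1 * (p:ℝ) := mul_le_mul_of_nonneg_right hΞle hp0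
    have he4 : Ξ A * (N:ℝ) ≤ Ξ A * M := mul_le_mul_of_nonneg_left hcard_lb hΞpos.le
    constructor
    · have h' : (Ξ A - ε) * M < (⌈Ξ A * ↑N⌉₊ : ℝ) := by nlinarith
      have := (lt_div_iff₀ hMpos).mpr h'
      linarith
    · rw [sub_lt_iff_lt_add, div_lt_iff₀ hMpos]
      nlinarith
  · rw [hfilter_zero A hAP hA]
    have hΞ0 : Ξ A = 0 := by
      have h1' := (hrange A (hPS A hAP)).1
      rw [hPposdef, Finset.mem_filter] at hA
      push_neg at hA
      have := hA hAP
      linarith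
    simp [hΞ0, hε]
end

section
/- Let C be a nonempty finite set, m > 1 natural, and let A_0, …, A_{k-1} ⊆ C each satisfy ‖A_j‖ ≥ 1 + log_m k, where ‖X‖ = log_m(|C|/(|C|-|X|)) (with ‖C‖ = ∞). Then ‖⋂_{j<k} A_j‖ ≥ 1; in particular the intersection is nonempty. -/
open scoped Classical

/-- k-linkedness core: if `‖A_j‖ ≥ 1 + log_m k` for all `j < k` (with `‖C‖ = ∞`
handled by disjunction), then `‖⋂_{j<k} A_j‖ ≥ 1`; in particular the intersection
is nonempty. -/
theorem stmt12 {α : Type*} [DecidableEq α] (C : Finset α) (m : ℕ)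
    (hC : C.Nonempty) (hm : 1 < m) (k : ℕ) (hk : 0 < k) (A : ℕ → Finset α)
    (hA : ∀ j < k, A j ⊆ C)
    (hnorm : ∀ j < k, A j = C ∨
      1 + Real.logb m (k : ℝ) ≤
        Real.logb m ((C.card : ℝ) / ((C.card : ℝ) - ((A j).card : ℝ)))) :
    ((Finset.range k).inf' ⟨0, Finset.mem_range.mpr hk⟩ A = C ∨
      1 ≤ Real.logb m ((C.card : ℝ) /
        ((C.card : ℝ) - (((Finset.range k).inf' ⟨0, Finset.mem_range.mpr hk⟩ A).card : ℝ)))) ∧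
    ((Finset.range k).inf' ⟨0, Finset.mem_range.mpr hk⟩ A).Nonempty := by
  classical
  set I := (Finset.range k).inf' ⟨0, Finset.mem_range.mpr hk⟩ A with hI
  have hm1 : (1 : ℝ) < (m : ℝ) := by exact_mod_cast hm
  have hcpos : (0 : ℝ) < (C.card : ℝ) := by
    exact_mod_cast Finset.card_pos.mpr hC
  have hkpos : (0 : ℝ) < (k : ℝ) := by exact_mod_cast hk
  have hIC : I ⊆ C := (Finset.inf'_le A (Finset.mem_range.mpr hk)).trans (hA 0 hk)
  -- per-j bound
  have key : ∀ j < k, (C.card : ℝ) - ((A j).card : ℝ) ≤ (C.card : ℝ) / ((m : ℝ) * k) := by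
    intro j hj
    by_cases hAC : A j = C
    · rw [hAC]
      simp
      positivity
    rcases hnorm j hj with h | h
    · exact absurd h hAC
    have hsub : A j ⊂ C := (hA j hj).ssubset_of_ne hAC
    have hlt : ((A j).card : ℝ) < (C.card : ℝ) := by
      exact_mod_cast Finset.card_lt_card hsub
    have hd : (0 : ℝ) < (C.card : ℝ) - ((A j).card : ℝ) := by linarith
    have hx : (0 : ℝ) < (C.card : ℝ) / ((C.card : ℝ) - ((A j).card : ℝ)) := by positivity
    have hmk : Real.logb m ((m : ℝ) * k) = 1 + Real.logb m k := by
      rw [Real.logb_mul (by positivity) (by positivity), Real.logb_self_eq_one hm1]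
    have h2 : (m : ℝ) * k ≤ (C.card : ℝ) / ((C.card : ℝ) - ((A j).card : ℝ)) := by
      rw [← Real.logb_le_logb hm1 (by positivity) hx, hmk]
      exact h
    rw [le_div_iff₀ hd] at h2
    rw [le_div_iff₀ (by positivity)]
    nlinarith
  -- union bound
  have hImem : ∀ x ∈ C, x ∉ I → ∃ j ∈ Finset.range k, x ∈ C \ A j := by
    intro x hx hxI
    by_contra hcon
    push_neg at hcon
    apply hxI
    have : ({x} : Finset α) ≤ I := by
      apply Finset.le_inf'
      intro j hj
      simp only [Finset.le_eq_subset, Finset.singleton_subset_iff]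
      have := hcon j hj
      simp only [Finset.mem_sdiff, not_and, not_not] at this
      exact this hx
    exact Finset.singleton_subset_iff.mp this
  have hcard : (C \ I).card ≤ ∑ j ∈ Finset.range k, (C \ A j).card := by
    calc (C \ I).card ≤ ((Finset.range k).biUnion (fun j => C \ A j)).card := by
          apply Finset.card_le_card
          intro x hx
          simp only [Finset.mem_sdiff] at hx
          obtain ⟨j, hj, hx'⟩ := hImem x hx.1 hx.2
          exact Finset.mem_biUnion.mpr ⟨j, hj, hx'⟩
      _ ≤ _ := Finset.card_biUnion_le
  have hsumR : ((C \ I).card : ℝ) ≤ ∑ j ∈ Finset.range k, ((C \ A j).card : ℝ) := by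
    exact_mod_cast hcard
  have hsdiff : ((C \ I).card : ℝ) = (C.card : ℝ) - (I.card : ℝ) := by
    rw [Finset.card_sdiff_of_subset hIC]
    have := Finset.card_le_card hIC
    push_cast [Nat.cast_sub this]
    ring
  have hsum2 : ∑ j ∈ Finset.range k, ((C \ A j).card : ℝ) ≤ (k : ℝ) * ((C.card : ℝ) / ((m : ℝ) * k)) := by
    calc ∑ j ∈ Finset.range k, ((C \ A j).card : ℝ)
        ≤ ∑ j ∈ Finset.range k, (C.card : ℝ) / ((m : ℝ) * k) := by
          apply Finset.sum_le_sum
          intro j hj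
          rw [Finset.mem_range] at hj
          have := key j hj
          rw [Finset.card_sdiff_of_subset (hA j hj)]
          have hle := Finset.card_le_card (hA j hj)
          push_cast [Nat.cast_sub hle]
          linarith
      _ = (Finset.range k).card • ((C.card : ℝ) / ((m : ℝ) * k)) := by
          rw [Finset.sum_const]
      _ = (k : ℝ) * ((C.card : ℝ) / ((m : ℝ) * k)) := by
          rw [Finset.card_range]; simp [nsmul_eq_mul]
  have hmain : (C.card : ℝ) - (I.card : ℝ) ≤ (C.card : ℝ) / (m : ℝ) := by
    have : (k : ℝ) * ((C.card : ℝ) / ((m : ℝ) * k)) = (C.card : ℝ) / (m : ℝ) := by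
      field_simp
    rw [← hsdiff]
    linarith [hsum2, hsumR]
  have hIpos : (0 : ℝ) < (I.card : ℝ) := by
    have : (C.card : ℝ) / (m : ℝ) < (C.card : ℝ) := by
      rw [div_lt_iff₀ (by linarith)]
      nlinarith
    linarith
  have hIne : I.Nonempty := Finset.card_pos.mp (by exact_mod_cast hIpos)
  refine ⟨?_, hIne⟩
  by_cases hIeq : I = C
  · exact Or.inl hIeq
  · right
    have hsub : I ⊂ C := hIC.ssubset_of_ne hIeq
    have hlt : ((I).card : ℝ) < (C.card : ℝ) := by
      exact_mod_cast Finset.card_lt_card hsub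
    have hd : (0 : ℝ) < (C.card : ℝ) - (I.card : ℝ) := by linarith
    have hmle : (m : ℝ) ≤ (C.card : ℝ) / ((C.card : ℝ) - (I.card : ℝ)) := by
      rw [le_div_iff₀ hd]
      have h3 : (m:ℝ)*((C.card:ℝ)-(I.card:ℝ)) ≤ (m:ℝ)*((C.card:ℝ)/(m:ℝ)) :=
        mul_le_mul_of_nonneg_left hmain (by positivity)
      rw [mul_div_cancel₀ _ (by positivity : (m:ℝ) ≠ 0)] at h3
      linarith
    calc (1 : ℝ) = Real.logb m m := (Real.logb_self_eq_one hm1).symm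
      _ ≤ _ := by
        rw [Real.logb_le_logb hm1 (by linarith) (by positivity)]
        exact hmle
end

section
/- Let K be a nonempty set, Ξ a finitely additive probability measure on P(K), I a finite set, and for each i ∈ I let f_i : K → [0,1] with ∫_K f_i dΞ ≥ 1 − ε_i for some ε_i ∈ (0,1). Then for any ε' > 0 and any finite partition P of K, if Ξ has the uniform approximation property, there is a nonempty finite u ⊆ K such that ||u ∩ A|/|u| − Ξ(A)| < ε' for all A ∈ P and (1/|u|) ∑_{k∈u} f_i(k) > 1 − ε_i − ε' for all i ∈ I. -/
open scoped Classical

/-- `P` is a finite partition of `K` into pairwise disjoint sets with union `K`. -/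
def IsFinPartition {K : Type*} (P : Finset (Set K)) : Prop :=
  (∀ A ∈ P, ∀ B ∈ P, A ≠ B → Disjoint A B) ∧ ⋃₀ ↑P = (Set.univ : Set K)

/-- The lower `Ξ`-integral of `f`: the supremum of lower Riemann-type sums over
finite partitions of `K`. For bounded `f` and `Ξ` on the full powerset this agrees
with the `Ξ`-integral. -/
noncomputable def lowerInt {K : Type*} (Ξ : Set K → ℝ) (f : K → ℝ) : ℝ :=
  sSup {x : ℝ | ∃ P : Finset (Set K), IsFinPartition P ∧
    x = ∑ A ∈ P, sInf (f '' A) * Ξ A}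


section Helpers

variable {K : Type*}

/-- common refinement of two finite families, keeping only nonempty pieces -/
noncomputable def prefine (P Q : Finset (Set K)) : Finset (Set K) :=
  ((P ×ˢ Q).image (fun p => p.1 ∩ p.2)).filter fun A => A.Nonempty

lemma prefine_mem {P Q : Finset (Set K)} {C : Set K} (hC : C ∈ prefine P Q) :
    C.Nonempty ∧ ∃ A ∈ P, ∃ B ∈ Q, C = A ∩ B := by
  simp only [prefine, Finset.mem_filter, Finset.mem_image, Finset.mem_product] at hC
  obtain ⟨⟨⟨a, b⟩, ⟨ha, hb⟩, rfl⟩, hne⟩ := hC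
  exact ⟨hne, a, ha, b, hb, rfl⟩

lemma prefine_part {P Q : Finset (Set K)} (hP : IsFinPartition P)
    (hQ : IsFinPartition Q) : IsFinPartition (prefine P Q) := by
  constructor
  · intro C hC D hD hne
    obtain ⟨-, A, hA, B, hB, rfl⟩ := prefine_mem hC
    obtain ⟨-, A', hA', B', hB', rfl⟩ := prefine_mem hD
    by_cases hAA : A = A'
    · subst hAA
      have hBB : B ≠ B' := fun h => hne (by rw [h])
      exact Set.disjoint_of_subset Set.inter_subset_right Set.inter_subset_right
        (hQ.1 B hB B' hB' hBB)
    · exact Set.disjoint_of_subset Set.inter_subset_left Set.inter_subset_left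
        (hP.1 A hA A' hA' hAA)
  · apply Set.eq_univ_of_forall
    intro k
    have hk1 : k ∈ ⋃₀ (↑P : Set (Set K)) := hP.2 ▸ Set.mem_univ k
    have hk2 : k ∈ ⋃₀ (↑Q : Set (Set K)) := hQ.2 ▸ Set.mem_univ k
    obtain ⟨A, hA, hkA⟩ := hk1
    obtain ⟨B, hB, hkB⟩ := hk2
    refine Set.mem_sUnion.2 ⟨A ∩ B, ?_, hkA, hkB⟩
    simp only [prefine, Finset.coe_filter, Set.mem_setOf_eq, Finset.mem_image,
      Finset.mem_product]
    exact ⟨⟨(A, B), ⟨by exact_mod_cast hA, by exact_mod_cast hB⟩, rfl⟩, ⟨k, hkA, hkB⟩⟩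

lemma prefine_refines_left {P Q : Finset (Set K)} {C : Set K} (hC : C ∈ prefine P Q) :
    ∃ A ∈ P, C ⊆ A := by
  obtain ⟨-, A, hA, B, hB, rfl⟩ := prefine_mem hC
  exact ⟨A, hA, Set.inter_subset_left⟩

lemma prefine_refines_right {P Q : Finset (Set K)} {C : Set K} (hC : C ∈ prefine P Q) :
    ∃ B ∈ Q, C ⊆ B := by
  obtain ⟨-, A, hA, B, hB, rfl⟩ := prefine_mem hC
  exact ⟨B, hB, Set.inter_subset_right⟩

end Helpers
section Helpers2
variable {K : Type*} {Ξ : Set K → ℝ}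

lemma meas_sUnion (h0 : Ξ ∅ = 0)
    (hadd : ∀ A B : Set K, Disjoint A B → Ξ (A ∪ B) = Ξ A + Ξ B)
    (S : Finset (Set K)) (hd : ∀ A ∈ S, ∀ B ∈ S, A ≠ B → Disjoint A B) :
    Ξ (⋃₀ ↑S) = ∑ A ∈ S, Ξ A := by
  induction S using Finset.induction_on with
  | empty => simpa using h0
  | @insert A S hA ih =>
    have h1 : (⋃₀ ↑(insert A S) : Set K) = A ∪ ⋃₀ ↑S := by
      simp [Set.sUnion_insert]
    have hdisj : Disjoint A (⋃₀ ↑S) := by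
      rw [Set.disjoint_sUnion_right]
      intro B hB
      exact hd A (Finset.mem_insert_self A S) B (Finset.mem_insert_of_mem hB)
        (fun h => hA (h ▸ hB))
    rw [h1, hadd A _ hdisj, Finset.sum_insert hA,
      ih (fun A hA B hB h => hd _ (Finset.mem_insert_of_mem hA) _
        (Finset.mem_insert_of_mem hB) h)]

end Helpers2

section Helpers3
variable {K : Type*}

lemma sUnion_fiber {Q R : Finset (Set K)} (hQu : ⋃₀ ↑Q = (Set.univ : Set K))
    (hRd : ∀ A ∈ R, ∀ B ∈ R, A ≠ B → Disjoint A B)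
    (href : ∀ B ∈ Q, ∃ A ∈ R, B ⊆ A) {A : Set K} (hA : A ∈ R) :
    ⋃₀ ↑(Q.filter (fun B => B ⊆ A)) = A := by
  apply Set.Subset.antisymm
  · rintro x ⟨B, hB, hxB⟩
    simp only [Finset.coe_filter, Set.mem_setOf_eq] at hB
    exact hB.2 hxB
  · intro k hk
    have : k ∈ ⋃₀ (↑Q : Set (Set K)) := hQu ▸ Set.mem_univ k
    obtain ⟨B, hB, hkB⟩ := this
    have hB' : B ∈ Q := hB
    obtain ⟨A', hA', hBA'⟩ := href B hB'
    have hAA' : A = A' := by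
      by_contra h
      exact (hRd A hA A' hA' h).ne_of_mem hk (hBA' hkB) rfl
    refine ⟨B, ?_, hkB⟩
    simp only [Finset.coe_filter, Set.mem_setOf_eq]
    exact ⟨hB', hAA' ▸ hBA'⟩

lemma fiber_pd {Q R : Finset (Set K)} (hQne : ∀ B ∈ Q, Set.Nonempty B)
    (hRd : ∀ A ∈ R, ∀ B ∈ R, A ≠ B → Disjoint A B) :
    (↑R : Set (Set K)).PairwiseDisjoint (fun A => Q.filter (fun B => B ⊆ A)) := by
  intro A hA A' hA' hne
  simp only [Function.onFun, Finset.disjoint_left, Finset.mem_filter]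
  rintro B ⟨hBQ, hBA⟩ ⟨-, hBA'⟩
  obtain ⟨k, hk⟩ := hQne B hBQ
  exact (hRd A hA A' hA' hne).ne_of_mem (hBA hk) (hBA' hk) rfl

lemma Q_eq_biUnion {Q R : Finset (Set K)} (href : ∀ B ∈ Q, ∃ A ∈ R, B ⊆ A)
    (hQne : ∀ B ∈ Q, Set.Nonempty B)
    (hRd : ∀ A ∈ R, ∀ B ∈ R, A ≠ B → Disjoint A B) :
    Q = R.biUnion (fun A => Q.filter (fun B => B ⊆ A)) := by
  apply Finset.ext
  intro B
  simp only [Finset.mem_biUnion, Finset.mem_filter]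
  constructor
  · intro hB
    obtain ⟨A, hA, hBA⟩ := href B hB
    exact ⟨A, hA, hB, hBA⟩
  · rintro ⟨A, hA, hB, -⟩
    exact hB

end Helpers3

section Helpers4
variable {K : Type*} {Ξ : Set K → ℝ}

lemma lowersum_mono (h0 : Ξ ∅ = 0)
    (hadd : ∀ A B : Set K, Disjoint A B → Ξ (A ∪ B) = Ξ A + Ξ B)
    (hrange : ∀ A : Set K, Ξ A ∈ Set.Icc (0 : ℝ) 1)
    {Q R : Finset (Set K)}
    (hQd : ∀ A ∈ Q, ∀ B ∈ Q, A ≠ B → Disjoint A B)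
    (hQu : ⋃₀ ↑Q = (Set.univ : Set K))
    (hQne : ∀ B ∈ Q, Set.Nonempty B)
    (hRd : ∀ A ∈ R, ∀ B ∈ R, A ≠ B → Disjoint A B)
    (href : ∀ B ∈ Q, ∃ A ∈ R, B ⊆ A)
    (f : K → ℝ) (hf0 : ∀ k, 0 ≤ f k) :
    ∑ A ∈ R, sInf (f '' A) * Ξ A ≤ ∑ B ∈ Q, sInf (f '' B) * Ξ B := by
  have hQsplit : ∑ B ∈ Q, sInf (f '' B) * Ξ B
      = ∑ A ∈ R, ∑ B ∈ Q.filter (fun B => B ⊆ A), sInf (f '' B) * Ξ B := by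
    rw [Q_eq_biUnion href hQne hRd]
    rw [Finset.sum_biUnion (fiber_pd hQne hRd)]
    congr 1
    rw [← Q_eq_biUnion href hQne hRd]
  rw [hQsplit]
  apply Finset.sum_le_sum
  intro A hA
  have hΞA : Ξ A = ∑ B ∈ Q.filter (fun B => B ⊆ A), Ξ B := by
    have h := meas_sUnion h0 hadd (Q.filter (fun B => B ⊆ A))
      (fun X hX Y hY h =>
        hQd X (Finset.mem_of_mem_filter X hX) Y (Finset.mem_of_mem_filter Y hY) h)
    rwa [sUnion_fiber hQu hRd href hA] at h
  rw [hΞA, Finset.mul_sum]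
  apply Finset.sum_le_sum
  intro B hB
  have hBQ : B ∈ Q := Finset.mem_of_mem_filter B hB
  have hBA : B ⊆ A := by
    simp only [Finset.mem_filter] at hB; exact hB.2
  apply mul_le_mul_of_nonneg_right _ (hrange B).1
  apply csInf_le_csInf ⟨0, fun x hx => by obtain ⟨k, -, rfl⟩ := hx; exact hf0 k⟩
    ((hQne B hBQ).image f) (Set.image_mono hBA)

end Helpers4

section Fold
variable {K ι : Type*} (Pi : ι → Finset (Set K))

noncomputable def foldPart (l : List ι) (base : Finset (Set K)) : Finset (Set K) :=
  l.foldr (fun i acc => prefine (Pi i) acc) base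

lemma fold_part {base : Finset (Set K)} (hb : IsFinPartition base) :
    ∀ l : List ι, (∀ i ∈ l, IsFinPartition (Pi i)) →
      IsFinPartition (foldPart Pi l base)
  | [], _ => hb
  | i :: l, h => by
    have := fold_part (base := base) hb l (fun j hj => h j (List.mem_cons_of_mem i hj))
    exact prefine_part (h i (List.mem_cons_self)) this

lemma fold_ne {base : Finset (Set K)} (hb : ∀ B ∈ base, Set.Nonempty B) :
    ∀ l : List ι, ∀ B ∈ foldPart Pi l base, Set.Nonempty B
  | [], B, hB => hb B hB
  | i :: l, B, hB => (prefine_mem hB).1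

lemma fold_refines_base {base : Finset (Set K)} :
    ∀ l : List ι, ∀ C ∈ foldPart Pi l base, ∃ A ∈ base, C ⊆ A
  | [], C, hC => ⟨C, hC, subset_rfl⟩
  | i :: l, C, hC => by
    obtain ⟨D, hD, hCD⟩ := prefine_refines_right hC
    obtain ⟨A, hA, hDA⟩ := fold_refines_base (base := base) l D hD
    exact ⟨A, hA, hCD.trans hDA⟩

lemma fold_refines_mem {base : Finset (Set K)} :
    ∀ l : List ι, ∀ i ∈ l, ∀ C ∈ foldPart Pi l base, ∃ A ∈ Pi i, C ⊆ A
  | j :: l, i, hi, C, hC => by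
    rcases List.mem_cons.1 hi with h | h
    · subst h
      exact prefine_refines_left hC
    · obtain ⟨D, hD, hCD⟩ := prefine_refines_right hC
      obtain ⟨A, hA, hDA⟩ := fold_refines_mem (base := base) l i h D hD
      exact ⟨A, hA, hCD.trans hDA⟩

end Fold

/-- Simultaneous sampling: if `Ξ` is a finitely additive probability measure on `P(K)`
with the uniform approximation property, and `f_i : K → [0,1]` satisfy
`∫ f_i dΞ ≥ 1 − ε_i` for `i` in a finite set `I`, then for any `ε' > 0` and any finite
partition `P` of `K` there is a nonempty finite `u ⊆ K` approximating all `Ξ(A)`,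
`A ∈ P`, within `ε'`, with `(1/|u|)∑_{k∈u} f_i(k) > 1 − ε_i − ε'` for all `i ∈ I`. -/
theorem stmt16 {K ι : Type*} (hK : Nonempty K) (Ξ : Set K → ℝ)
    (h0 : Ξ ∅ = 0) (h1 : Ξ Set.univ = 1)
    (hrange : ∀ A : Set K, Ξ A ∈ Set.Icc (0 : ℝ) 1)
    (hadd : ∀ A B : Set K, Disjoint A B → Ξ (A ∪ B) = Ξ A + Ξ B)
    (huap : ∀ ε : ℝ, 0 < ε → ∀ P : Finset (Set K), IsFinPartition P →
      ∃ u : Finset K, u.Nonempty ∧ ∀ A ∈ P,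
        |((u.filter (fun k => k ∈ A)).card : ℝ) / (u.card : ℝ) - Ξ A| < ε)
    (I : Finset ι) (f : ι → K → ℝ) (hf : ∀ i ∈ I, ∀ k, f i k ∈ Set.Icc (0 : ℝ) 1)
    (ε : ι → ℝ) (hε : ∀ i ∈ I, ε i ∈ Set.Ioo (0 : ℝ) 1)
    (hint : ∀ i ∈ I, 1 - ε i ≤ lowerInt Ξ (f i))
    (ε' : ℝ) (hε' : 0 < ε') (P : Finset (Set K)) (hP : IsFinPartition P) :
    ∃ u : Finset K, u.Nonempty ∧
      (∀ A ∈ P, |((u.filter (fun k => k ∈ A)).card : ℝ) / (u.card : ℝ) - Ξ A| < ε') ∧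
      ∀ i ∈ I, 1 - ε i - ε' < (∑ k ∈ u, f i k) / (u.card : ℝ) := by
  classical
  -- the trivial partition
  have htriv : IsFinPartition ({Set.univ} : Finset (Set K)) := by
    constructor
    · intro A hA B hB hne
      simp only [Finset.mem_singleton] at hA hB
      exact absurd (hA.trans hB.symm) hne
    · simp
  -- choose partitions witnessing the lower integral bound
  have hex : ∀ i : ι, ∃ Pi : Finset (Set K), IsFinPartition Pi ∧
      (i ∈ I → 1 - ε i - ε' / 2 < ∑ A ∈ Pi, sInf (f i '' A) * Ξ A) := by
    intro i
    by_cases hi : i ∈ I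
    · have hlt : 1 - ε i - ε' / 2 < lowerInt Ξ (f i) :=
        lt_of_lt_of_le (by linarith) (hint i hi)
      have hne : {x : ℝ | ∃ Pp : Finset (Set K), IsFinPartition Pp ∧
          x = ∑ A ∈ Pp, sInf (f i '' A) * Ξ A}.Nonempty :=
        ⟨_, {Set.univ}, htriv, rfl⟩
      obtain ⟨x, hx, hxlt⟩ := exists_lt_of_lt_csSup hne hlt
      obtain ⟨Pp, hPp, rfl⟩ := hx
      exact ⟨Pp, hPp, fun _ => hxlt⟩
    · exact ⟨{Set.univ}, htriv, fun h => absurd h hi⟩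
  choose Pi hPipart hPisum using hex
  -- base partition: nonempty pieces of P
  set base := P.filter (fun A => Set.Nonempty A) with hbasedef
  have hbasepart : IsFinPartition base := by
    constructor
    · intro A hA B hB hne
      exact hP.1 A (Finset.mem_of_mem_filter A hA) B (Finset.mem_of_mem_filter B hB) hne
    · apply Set.eq_univ_of_forall
      intro k
      have : k ∈ ⋃₀ (↑P : Set (Set K)) := hP.2 ▸ Set.mem_univ k
      obtain ⟨A, hA, hkA⟩ := this
      refine ⟨A, ?_, hkA⟩
      simp only [hbasedef, Finset.coe_filter, Set.mem_setOf_eq]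
      exact ⟨hA, k, hkA⟩
  have hbasene : ∀ B ∈ base, Set.Nonempty B := by
    intro B hB
    simp only [hbasedef, Finset.mem_filter] at hB
    exact hB.2
  -- the common refinement
  set Q := foldPart Pi I.toList base with hQdef
  have hQpart : IsFinPartition Q :=
    fold_part Pi hbasepart I.toList (fun i _ => hPipart i)
  have hQne : ∀ B ∈ Q, Set.Nonempty B := fold_ne Pi hbasene I.toList
  have hQrefP : ∀ C ∈ Q, ∃ A ∈ P, C ⊆ A := by
    intro C hC
    obtain ⟨A, hA, h⟩ := fold_refines_base Pi I.toList C hC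
    exact ⟨A, Finset.mem_of_mem_filter A hA, h⟩
  have hQrefPi : ∀ i ∈ I, ∀ C ∈ Q, ∃ A ∈ Pi i, C ⊆ A :=
    fun i hi => fold_refines_mem Pi I.toList i (Finset.mem_toList.2 hi)
  -- sample with small tolerance
  set ε'' := ε' / (2 * (Q.card + 1)) with hε''def
  have hε''pos : 0 < ε'' := by positivity
  have hQcardε : (Q.card : ℝ) * ε'' ≤ ε' / 2 := by
    have hc : (0:ℝ) ≤ Q.card := Nat.cast_nonneg _
    rw [hε''def, ← mul_div_assoc, div_le_div_iff₀ (by positivity) two_pos]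
    nlinarith
  obtain ⟨u, hune, hfreq⟩ := huap ε'' hε''pos Q hQpart
  have hucard : (0:ℝ) < u.card := by exact_mod_cast Finset.card_pos.2 hune
  refine ⟨u, hune, ?_, ?_⟩
  · -- frequency approximation for A ∈ P
    intro A hA
    set F := Q.filter (fun B => B ⊆ A) with hFdef
    have hΞA : Ξ A = ∑ B ∈ F, Ξ B := by
      have h := meas_sUnion h0 hadd F
        (fun X hX Y hY h =>
          hQpart.1 X (Finset.mem_of_mem_filter X hX) Y (Finset.mem_of_mem_filter Y hY) h)
      rwa [hFdef, sUnion_fiber hQpart.2 hP.1 hQrefP hA] at h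
    have hcard : (u.filter (fun k => k ∈ A)) = F.biUnion (fun B => u.filter (fun k => k ∈ B)) := by
      apply Finset.ext
      intro k
      simp only [Finset.mem_filter, Finset.mem_biUnion]
      constructor
      · rintro ⟨hku, hkA⟩
        have : k ∈ ⋃₀ (↑Q : Set (Set K)) := hQpart.2 ▸ Set.mem_univ k
        obtain ⟨B, hB, hkB⟩ := this
        have hBQ : B ∈ Q := hB
        obtain ⟨A', hA', hBA'⟩ := hQrefP B hBQ
        have : A = A' := by
          by_contra h
          exact (hP.1 A hA A' hA' h).ne_of_mem hkA (hBA' hkB) rfl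
        refine ⟨B, ?_, hku, hkB⟩
        rw [hFdef, Finset.mem_filter]
        exact ⟨hBQ, this ▸ hBA'⟩
      · rintro ⟨B, hBF, hku, hkB⟩
        have hBA : B ⊆ A := by
          rw [hFdef, Finset.mem_filter] at hBF
          exact hBF.2
        exact ⟨hku, hBA hkB⟩
    have hdisjF : (↑F : Set (Set K)).PairwiseDisjoint (fun B => u.filter (fun k => k ∈ B)) := by
      intro B hB B' hB' hne
      have hBQ : B ∈ Q := Finset.mem_of_mem_filter B (by exact_mod_cast hB)
      have hB'Q : B' ∈ Q := Finset.mem_of_mem_filter B' (by exact_mod_cast hB')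
      simp only [Function.onFun, Finset.disjoint_left, Finset.mem_filter]
      rintro k ⟨hku, hkB⟩ ⟨-, hkB'⟩
      exact (hQpart.1 B hBQ B' hB'Q hne).ne_of_mem hkB hkB' rfl
    have hcardsum : ((u.filter (fun k => k ∈ A)).card : ℝ)
        = ∑ B ∈ F, ((u.filter (fun k => k ∈ B)).card : ℝ) := by
      rw [hcard, Finset.card_biUnion (fun B hB B' hB' h => hdisjF hB hB' h)]
      push_cast
      rfl
    have key : |((u.filter (fun k => k ∈ A)).card : ℝ) / (u.card : ℝ) - Ξ A|
        ≤ (F.card : ℝ) * ε'' := by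
      rw [hcardsum, hΞA, Finset.sum_div, ← Finset.sum_sub_distrib]
      calc |∑ B ∈ F, (((u.filter (fun k => k ∈ B)).card : ℝ) / (u.card : ℝ) - Ξ B)|
          ≤ ∑ B ∈ F, |((u.filter (fun k => k ∈ B)).card : ℝ) / (u.card : ℝ) - Ξ B| :=
            Finset.abs_sum_le_sum_abs _ _
        _ ≤ ∑ _B ∈ F, ε'' := Finset.sum_le_sum (fun B hB =>
            le_of_lt (hfreq B (Finset.mem_of_mem_filter B hB)))
        _ = (F.card : ℝ) * ε'' := by rw [Finset.sum_const, nsmul_eq_mul]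
    have hFle : (F.card : ℝ) ≤ Q.card := by
      exact_mod_cast Finset.card_filter_le Q _
    have : (F.card : ℝ) * ε'' ≤ (Q.card : ℝ) * ε'' :=
      mul_le_mul_of_nonneg_right hFle (le_of_lt hε''pos)
    linarith [key, hQcardε]
  · -- integral lower bounds
    intro i hi
    have hf0 : ∀ k, 0 ≤ f i k := fun k => (hf i hi k).1
    have hf1 : ∀ k, f i k ≤ 1 := fun k => (hf i hi k).2
    -- split the sum over u according to Q
    have huu : u = Q.biUnion (fun B => u.filter (fun k => k ∈ B)) := by
      apply Finset.ext
      intro k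
      simp only [Finset.mem_biUnion, Finset.mem_filter]
      constructor
      · intro hk
        have : k ∈ ⋃₀ (↑Q : Set (Set K)) := hQpart.2 ▸ Set.mem_univ k
        obtain ⟨B, hB, hkB⟩ := this
        exact ⟨B, hB, hk, hkB⟩
      · rintro ⟨B, -, hk, -⟩
        exact hk
    have hdisjQ : (↑Q : Set (Set K)).PairwiseDisjoint (fun B => u.filter (fun k => k ∈ B)) := by
      intro B hB B' hB' hne
      simp only [Function.onFun, Finset.disjoint_left, Finset.mem_filter]
      rintro k ⟨hku, hkB⟩ ⟨-, hkB'⟩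
      exact (hQpart.1 B (by exact_mod_cast hB) B' (by exact_mod_cast hB') hne).ne_of_mem
        hkB hkB' rfl
    have hsplit : ∑ k ∈ u, f i k
        = ∑ B ∈ Q, ∑ k ∈ u.filter (fun x => x ∈ B), f i k := by
      have h := Finset.sum_biUnion (f := f i) hdisjQ
      rw [← huu] at h
      exact h
    -- lower bound each piece
    have hpiece : ∀ B ∈ Q, sInf (f i '' B) * ((u.filter (fun k => k ∈ B)).card : ℝ)
        ≤ ∑ k ∈ u.filter (fun x => x ∈ B), f i k := by
      intro B hB
      have hbdd : BddBelow (f i '' B) :=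
        ⟨0, fun x hx => by obtain ⟨k, -, rfl⟩ := hx; exact hf0 k⟩
      have := Finset.card_nsmul_le_sum (u.filter (fun x => x ∈ B)) (f i) (sInf (f i '' B))
        (fun k hk => csInf_le hbdd ⟨k, (Finset.mem_filter.1 hk).2, rfl⟩)
      rw [nsmul_eq_mul] at this
      linarith [this]
    -- sInf bounds
    have hsInf0 : ∀ B ∈ Q, 0 ≤ sInf (f i '' B) := by
      intro B hB
      apply le_csInf ((hQne B hB).image (f i))
      rintro x ⟨k, -, rfl⟩
      exact hf0 k
    have hsInf1 : ∀ B ∈ Q, sInf (f i '' B) ≤ 1 := by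
      intro B hB
      obtain ⟨k, hk⟩ := hQne B hB
      have hbdd : BddBelow (f i '' B) :=
        ⟨0, fun x hx => by obtain ⟨k', -, rfl⟩ := hx; exact hf0 k'⟩
      exact le_trans (csInf_le hbdd ⟨k, hk, rfl⟩) (hf1 k)
    -- chain of inequalities
    have step1 : ∑ B ∈ Q, sInf (f i '' B) * (((u.filter (fun k => k ∈ B)).card : ℝ) / (u.card : ℝ))
        ≤ (∑ k ∈ u, f i k) / (u.card : ℝ) := by
      rw [hsplit, Finset.sum_div]
      apply Finset.sum_le_sum
      intro B hB
      have h2 := hpiece B hB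
      calc sInf (f i '' B) * (((u.filter (fun k => k ∈ B)).card : ℝ) / (u.card : ℝ))
          = (sInf (f i '' B) * ((u.filter (fun k => k ∈ B)).card : ℝ)) / (u.card : ℝ) := by
            ring
        _ ≤ (∑ k ∈ u.filter (fun x => x ∈ B), f i k) / (u.card : ℝ) := by
            exact div_le_div_of_nonneg_right h2 hucard.le
    have step2 : ∀ B ∈ Q, sInf (f i '' B) * (Ξ B - ε'')
        ≤ sInf (f i '' B) * (((u.filter (fun k => k ∈ B)).card : ℝ) / (u.card : ℝ)) := by
      intro B hB
      apply mul_le_mul_of_nonneg_left _ (hsInf0 B hB)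
      have h := hfreq B hB
      rw [abs_lt] at h
      linarith [h.1]
    have hsum2 : ∑ B ∈ Q, sInf (f i '' B) * (Ξ B - ε'')
        ≤ ∑ B ∈ Q, sInf (f i '' B)
            * (((u.filter (fun k => k ∈ B)).card : ℝ) / (u.card : ℝ)) :=
      Finset.sum_le_sum step2
    have step3 : ∑ B ∈ Q, sInf (f i '' B) * (Ξ B - ε'')
        = (∑ B ∈ Q, sInf (f i '' B) * Ξ B) - ε'' * ∑ B ∈ Q, sInf (f i '' B) := by
      rw [Finset.mul_sum, ← Finset.sum_sub_distrib]
      apply Finset.sum_congr rfl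
      intro B _
      ring
    have step4 : ∑ B ∈ Q, sInf (f i '' B) ≤ (Q.card : ℝ) := by
      calc ∑ B ∈ Q, sInf (f i '' B) ≤ ∑ _B ∈ Q, (1:ℝ) := Finset.sum_le_sum hsInf1
        _ = (Q.card : ℝ) := by simp
    have step5 : 1 - ε i - ε' / 2 < ∑ B ∈ Q, sInf (f i '' B) * Ξ B := by
      refine lt_of_lt_of_le (hPisum i hi) ?_
      exact lowersum_mono h0 hadd hrange hQpart.1 hQpart.2 hQne (hPipart i).1
        (hQrefPi i hi) (f i) hf0
    have step6 : ε'' * (∑ B ∈ Q, sInf (f i '' B)) ≤ (Q.card : ℝ) * ε'' := by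
      rw [mul_comm]
      exact mul_le_mul_of_nonneg_right step4 (le_of_lt hε''pos)
    linarith
end

section
/- Let C be a nonempty finite set, m > 1 a natural number, I a nonempty finite set, J ⊆ I nonempty, and (A_i)_{i∈I} subsets of C with ‖A_i‖ ≥ 1 + c + 4·log_m L for all i ∈ J, where c ≥ 0, L ≥ 1 and n ≥ 1 are reals/naturals with n² ≤ L². Then the set B = { t' ∈ C : |{ i ∈ J : t' ∈ A_i }| ≥ |J|(1 − 1/n²) } satisfies ‖B‖ ≥ 1 + c + 4·log_m L − 2·log_m n, where ‖X‖ = log_m(|C|/(|C|-|X|)) (with ‖C‖ = ∞). -/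
open scoped Classical

/-- Successor-level step of the pseudo-fusion: if `‖A_i‖ ≥ 1 + c + 4·log_m L` for all
`i ∈ J` (with `‖C‖ = ∞` handled by disjunction) and `n² ≤ L²`, then
`B = {t' ∈ C : |{i ∈ J : t' ∈ A_i}| ≥ |J|(1 − 1/n²)}` satisfies
`‖B‖ ≥ 1 + c + 4·log_m L − 2·log_m n`. -/
theorem stmt19 {α ι : Type*} [DecidableEq α] (C : Finset α) (hC : C.Nonempty)
    (m : ℕ) (hm : 1 < m)
    (I J : Finset ι) (hJI : J ⊆ I) (hJ : J.Nonempty) (A : ι → Finset α)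
    (hA : ∀ i ∈ J, A i ⊆ C)
    (c : ℝ) (hc : 0 ≤ c) (L n : ℕ) (hL : 1 ≤ L) (hn : 1 ≤ n) (hnL : n ^ 2 ≤ L ^ 2)
    (hnorm : ∀ i ∈ J, A i = C ∨
      1 + c + 4 * Real.logb m (L : ℝ) ≤
        Real.logb m ((C.card : ℝ) / ((C.card : ℝ) - ((A i).card : ℝ)))) :
    C.filter (fun t' => (J.card : ℝ) * (1 - 1 / (n : ℝ) ^ 2) ≤
        ((J.filter (fun i => t' ∈ A i)).card : ℝ)) = C ∨
    1 + c + 4 * Real.logb m (L : ℝ) - 2 * Real.logb m (n : ℝ) ≤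
      Real.logb m ((C.card : ℝ) / ((C.card : ℝ) -
        ((C.filter (fun t' => (J.card : ℝ) * (1 - 1 / (n : ℝ) ^ 2) ≤
          ((J.filter (fun i => t' ∈ A i)).card : ℝ))).card : ℝ))) := by
  set B := C.filter (fun t' => (J.card : ℝ) * (1 - 1 / (n : ℝ) ^ 2) ≤
      ((J.filter (fun i => t' ∈ A i)).card : ℝ)) with hB
  by_cases hBC : B = C
  · exact Or.inl hBC
  right
  set s : ℝ := 1 + c + 4 * Real.logb m (L : ℝ) with hs
  have hm1 : (1 : ℝ) < (m : ℝ) := by exact_mod_cast hm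
  have hmpos : (0 : ℝ) < (m : ℝ) := by linarith
  have hmne : (m : ℝ) ≠ 1 := ne_of_gt hm1
  have hCpos : (0 : ℝ) < (C.card : ℝ) := by
    exact_mod_cast Finset.card_pos.mpr hC
  have hnpos : (0 : ℝ) < (n : ℝ) ^ 2 := by positivity
  have hJpos : (0 : ℝ) < (J.card : ℝ) := by
    exact_mod_cast Finset.card_pos.mpr hJ
  -- D bound
  set D : ℝ := (C.card : ℝ) * (m : ℝ) ^ (-s) with hD
  have hDpos : 0 < D := by
    apply mul_pos hCpos (Real.rpow_pos_of_pos hmpos _)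
  have hkey : ∀ i ∈ J, (C.card : ℝ) - ((A i).card : ℝ) ≤ D := by
    intro i hi
    rcases hnorm i hi with h | h
    · rw [h]; simp; exact le_of_lt hDpos
    · have hlt : ((A i).card : ℝ) < (C.card : ℝ) := by
        have hsub : A i ⊆ C := hA i hi
        have hne : A i ≠ C := by
          intro he
          rw [he] at h
          simp at h
          have hlogL : 0 ≤ Real.logb m (L : ℝ) := by
            apply Real.logb_nonneg hm1
            exact_mod_cast hL
          linarith [hs.le, hs.ge]
        exact_mod_cast Finset.card_lt_card (lt_of_le_of_ne hsub hne)
      have hd : (0 : ℝ) < (C.card : ℝ) - ((A i).card : ℝ) := by linarith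
      have hx : (0 : ℝ) < (C.card : ℝ) / ((C.card : ℝ) - ((A i).card : ℝ)) :=
        div_pos hCpos hd
      have : (m : ℝ) ^ s ≤ (C.card : ℝ) / ((C.card : ℝ) - ((A i).card : ℝ)) := by
        calc (m : ℝ) ^ s ≤ (m : ℝ) ^ (Real.logb m ((C.card : ℝ) / ((C.card : ℝ) - ((A i).card : ℝ)))) :=
              Real.rpow_le_rpow_of_exponent_le (le_of_lt hm1) h
          _ = _ := Real.rpow_logb hmpos hmne hx
      have hms : (0 : ℝ) < (m : ℝ) ^ s := Real.rpow_pos_of_pos hmpos _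
      rw [le_div_iff₀ hd] at this
      have h2 : (C.card : ℝ) - ((A i).card : ℝ) ≤ (C.card : ℝ) / (m : ℝ) ^ s := by
        rw [le_div_iff₀ hms]; linarith [mul_comm ((m:ℝ)^s) ((C.card : ℝ) - ((A i).card : ℝ))]
      calc (C.card : ℝ) - ((A i).card : ℝ) ≤ (C.card : ℝ) / (m : ℝ) ^ s := h2
        _ = D := by rw [hD, Real.rpow_neg (le_of_lt hmpos), div_eq_mul_inv]
  -- double counting
  have hcount : ∑ t ∈ C, ((J.filter (fun i => t ∈ A i)).card : ℝ) =
      ∑ i ∈ J, ((A i).card : ℝ) := by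
    push_cast
    rw [← Nat.cast_sum, ← Nat.cast_sum]
    congr 1
    simp only [Finset.card_filter]
    rw [Finset.sum_comm]
    apply Finset.sum_congr rfl
    intro i hi
    rw [← Finset.card_filter]
    congr 1
    rw [Finset.filter_mem_eq_inter, Finset.inter_eq_right.mpr (hA i hi)]
  have hS : ∑ t ∈ C, ((J.card : ℝ) - ((J.filter (fun i => t ∈ A i)).card : ℝ)) ≤
      (J.card : ℝ) * D := by
    rw [Finset.sum_sub_distrib, hcount, Finset.sum_const, nsmul_eq_mul]
    have : ∑ i ∈ J, ((C.card : ℝ) - ((A i).card : ℝ)) ≤ ∑ _i ∈ J, D :=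
      Finset.sum_le_sum hkey
    rw [Finset.sum_sub_distrib, Finset.sum_const, nsmul_eq_mul, Finset.sum_const,
      nsmul_eq_mul] at this
    linarith
  -- complement
  have hBsub : B ⊆ C := Finset.filter_subset _ _
  have hcb : B.card < C.card := Finset.card_lt_card (lt_of_le_of_ne hBsub hBC)
  set cb : ℝ := ((C \ B).card : ℝ) with hcb'
  have hcbeq : cb = (C.card : ℝ) - (B.card : ℝ) := by
    rw [hcb', Finset.card_sdiff_of_subset hBsub]
    have := Finset.card_le_card hBsub
    push_cast [this]
    ring
  have hCBne : (C \ B).Nonempty := by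
    rw [← Finset.card_pos, Finset.card_sdiff_of_subset hBsub]
    omega
  have hcbpos : 0 < cb := by
    rw [hcb']
    exact_mod_cast Finset.card_pos.mpr hCBne
  -- per-element bound on complement
  have hstep : ∀ t ∈ C \ B, (J.card : ℝ) / (n : ℝ) ^ 2 <
      (J.card : ℝ) - ((J.filter (fun i => t ∈ A i)).card : ℝ) := by
    intro t ht
    rw [Finset.mem_sdiff] at ht
    have hnotB : ¬ ((J.card : ℝ) * (1 - 1 / (n : ℝ) ^ 2) ≤
        ((J.filter (fun i => t ∈ A i)).card : ℝ)) := by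
      intro h
      exact ht.2 (Finset.mem_filter.mpr ⟨ht.1, h⟩)
    push_neg at hnotB
    have : (J.card : ℝ) * (1 - 1 / (n : ℝ) ^ 2) = (J.card : ℝ) - (J.card : ℝ) / (n : ℝ) ^ 2 := by
      field_simp
    rw [this] at hnotB
    linarith
  have hsum1 : cb * ((J.card : ℝ) / (n : ℝ) ^ 2) <
      ∑ t ∈ C \ B, ((J.card : ℝ) - ((J.filter (fun i => t ∈ A i)).card : ℝ)) := by
    have := Finset.sum_lt_sum_of_nonempty hCBne hstep
    rwa [Finset.sum_const, nsmul_eq_mul] at this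
  have hsum2 : ∑ t ∈ C \ B, ((J.card : ℝ) - ((J.filter (fun i => t ∈ A i)).card : ℝ)) ≤
      ∑ t ∈ C, ((J.card : ℝ) - ((J.filter (fun i => t ∈ A i)).card : ℝ)) := by
    apply Finset.sum_le_sum_of_subset_of_nonneg (Finset.sdiff_subset)
    intro t ht _
    have : (J.filter (fun i => t ∈ A i)).card ≤ J.card :=
      Finset.card_le_card (Finset.filter_subset _ _)
    have : ((J.filter (fun i => t ∈ A i)).card : ℝ) ≤ (J.card : ℝ) := by exact_mod_cast this
    linarith
  have hmain : cb < (n : ℝ) ^ 2 * D := by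
    have h1 : cb * ((J.card : ℝ) / (n : ℝ) ^ 2) < (J.card : ℝ) * D := by
      calc cb * ((J.card : ℝ) / (n : ℝ) ^ 2) < _ := hsum1
        _ ≤ _ := hsum2
        _ ≤ (J.card : ℝ) * D := hS
    rw [← mul_div_assoc] at h1
    have h1' := (div_lt_iff₀ hnpos).mp h1
    nlinarith [h1', hJpos]
  -- final log computation
  have hgoal2 : (m : ℝ) ^ s / (n : ℝ) ^ 2 < (C.card : ℝ) / cb := by
    rw [div_lt_div_iff₀ hnpos hcbpos]
    have hms : (0 : ℝ) < (m : ℝ) ^ s := Real.rpow_pos_of_pos hmpos _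
    have : cb * (m : ℝ) ^ s < (n : ℝ) ^ 2 * D * (m : ℝ) ^ s :=
      mul_lt_mul_of_pos_right hmain hms
    have hDs : D * (m : ℝ) ^ s = (C.card : ℝ) := by
      rw [hD, mul_assoc, ← Real.rpow_add hmpos]
      simp
    calc (m : ℝ) ^ s * cb = cb * (m : ℝ) ^ s := mul_comm _ _
      _ < (n : ℝ) ^ 2 * D * (m : ℝ) ^ s := this
      _ = (C.card : ℝ) * (n : ℝ) ^ 2 := by rw [mul_assoc, hDs, mul_comm]
  have hlhspos : (0 : ℝ) < (m : ℝ) ^ s / (n : ℝ) ^ 2 :=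
    div_pos (Real.rpow_pos_of_pos hmpos _) hnpos
  have hlog : Real.logb m ((m : ℝ) ^ s / (n : ℝ) ^ 2) ≤ Real.logb m ((C.card : ℝ) / cb) :=
    Real.logb_le_logb_of_le hm1 hlhspos (le_of_lt hgoal2)
  have hlogeq : Real.logb m ((m : ℝ) ^ s / (n : ℝ) ^ 2) = s - 2 * Real.logb m (n : ℝ) := by
    rw [Real.logb_div (ne_of_gt (Real.rpow_pos_of_pos hmpos _)) (ne_of_gt hnpos),
      Real.logb_rpow hmpos hmne, Real.logb_pow]
    push_cast
    ring
  rw [hlogeq] at hlog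
  rw [← hcbeq]
  exact hlog
end
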